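/- Let n ≥ 3. Realize the even affine Weyl group of type C_n concretely as the set of affine transformations of ℝ^n (vectors x : Fin n → ℝ) of the form x ↦ y with y i = ε i * x (σ⁻¹ i) + t i, where σ is a permutation of Fin n, ε : Fin n → ℝ has ε i ∈ {1, -1} for all i and satisfies sign(σ) · ∏_i ε i = +1, and t : Fin n → ℤ. Then: (i) for every x : Fin n → ℝ there exists such a transformation carrying x to a point y satisfying y 0 ≤ 1/2, y 1 ≤ 1/2, y i ≥ y 2 for i ∈ {0, 1}, y j ≥ y k whenever 2 ≤ j ≤ k ≤ n-1, and y (n-1) ≥ 0; and (ii) if both x and y satisfy the strict version of these inequalities (x 0 < 1/2, x 1 < 1/2, x 0 > x 2, x 1 > x 2, x 2 > x 3 > ⋯ > x (n-1) > 0, likewise for y) and y is obtained from x by such a transformation, then y = x. -/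

import Mathlib

open Finset

namespace CnFD

lemma card_filter_val_lt {n : ℕ} (m : ℕ) (hm : m ≤ n) :
    ((Finset.univ : Finset (Fin n)).filter (fun j : Fin n => (j : ℕ) < m)).card = m := by
  have h : ((Finset.univ : Finset (Fin n)).filter (fun j : Fin n => (j : ℕ) < m)).card
      = (Finset.range m).card := by
    refine Finset.card_bij (fun j _ => (j : ℕ)) ?_ ?_ ?_
    · intro a ha; simp at ha ⊢; exact ha
    · intro a _ b _ h; exact Fin.ext h
    · intro b hb
      simp at hb
      exact ⟨⟨b, lt_of_lt_of_le hb hm⟩, by simp [hb], rfl⟩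
  rw [Finset.card_range] at h
  exact h

lemma card_filter_comp {n : ℕ} (x : Fin n → ℝ) (S : Equiv.Perm (Fin n)) (v : ℝ) :
    ((Finset.univ : Finset (Fin n)).filter (fun j => v < x (S j))).card
      = (Finset.univ.filter (fun j => v < x j)).card := by
  refine Finset.card_bij (fun j _ => S j) ?_ ?_ ?_
  · intro a ha; simp at ha ⊢; exact ha
  · intro a _ b _ h; exact S.injective h
  · intro b hb; simp at hb ⊢; exact ⟨S.symm b, by simpa using hb⟩

variable {n : ℕ} (hn : 2 < n) (x : Fin n → ℝ)

/-- In the open chamber, coordinates with index ≥ 2 are ≤ x 2. -/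
lemma le_x2 (hjk : ∀ j k : Fin n, 2 ≤ (j : ℕ) → j < k → x k < x j)
    (i : Fin n) (hi : 2 ≤ (i : ℕ)) : x i ≤ x ⟨2, by omega⟩ := by
  rcases eq_or_lt_of_le hi with h | h
  · have : i = ⟨2, by omega⟩ := Fin.ext h.symm
    rw [this]
  · exact (hjk ⟨2, by omega⟩ i (by simp) (by simpa [Fin.lt_def] using h)).le

lemma last_le (hjk : ∀ j k : Fin n, 2 ≤ (j : ℕ) → j < k → x k < x j)
    (i : Fin n) (hi : 2 ≤ (i : ℕ)) : x ⟨n - 1, by omega⟩ ≤ x i := by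
  rcases eq_or_lt_of_le (Nat.le_sub_one_of_lt i.isLt : (i : ℕ) ≤ n - 1) with h | h
  · have : i = ⟨n - 1, by omega⟩ := Fin.ext h
    rw [this]
  · exact (hjk i ⟨n - 1, by omega⟩ hi (by simpa [Fin.lt_def] using h)).le

lemma chamber_bounds
    (h0 : x ⟨0, by omega⟩ < 1 / 2) (h1 : x ⟨1, by omega⟩ < 1 / 2)
    (h20 : x ⟨2, by omega⟩ < x ⟨0, by omega⟩) (h21 : x ⟨2, by omega⟩ < x ⟨1, by omega⟩)
    (hjk : ∀ j k : Fin n, 2 ≤ (j : ℕ) → j < k → x k < x j)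
    (hlast : 0 < x ⟨n - 1, by omega⟩) :
    ∀ i : Fin n, 0 < x i ∧ x i < 1 / 2 := by
  have h2pos : 0 < x ⟨2, by omega⟩ :=
    lt_of_lt_of_le hlast (last_le hn x hjk ⟨2, by omega⟩ (by simp))
  have h2lt : x ⟨2, by omega⟩ < 1 / 2 := h20.trans h0
  intro i
  rcases lt_or_ge (i : ℕ) 2 with h | h
  · interval_cases hi : (i : ℕ)
    · have : i = ⟨0, by omega⟩ := Fin.ext hi
      rw [this]; exact ⟨h2pos.trans h20, h0⟩
    · have : i = ⟨1, by omega⟩ := Fin.ext hi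
      rw [this]; exact ⟨h2pos.trans h21, h1⟩
  · exact ⟨lt_of_lt_of_le hlast (last_le hn x hjk i h),
      lt_of_le_of_lt (le_x2 hn x hjk i h) h2lt⟩

end CnFD
open Finset
namespace CnFD2

variable {n : ℕ}

lemma rank_eq (hn : 2 < n) (x : Fin n → ℝ)
    (h20 : x ⟨2, by omega⟩ < x ⟨0, by omega⟩) (h21 : x ⟨2, by omega⟩ < x ⟨1, by omega⟩)
    (hjk : ∀ j k : Fin n, 2 ≤ (j : ℕ) → j < k → x k < x j)
    (i : Fin n) (hi : 2 ≤ (i : ℕ)) :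
    ((Finset.univ : Finset (Fin n)).filter (fun j => x i < x j)).card = (i : ℕ) := by
  have hle2 : ∀ k : Fin n, 2 ≤ (k : ℕ) → x k ≤ x ⟨2, by omega⟩ := by
    intro k hk
    rcases eq_or_lt_of_le hk with h | h
    · have : k = ⟨2, by omega⟩ := Fin.ext h.symm
      rw [this]
    · exact (hjk ⟨2, by omega⟩ k (by simp) (by simpa [Fin.lt_def] using h)).le
  have hset : (Finset.univ : Finset (Fin n)).filter (fun j => x i < x j)
      = Finset.univ.filter (fun j : Fin n => (j : ℕ) < (i : ℕ)) := by
    ext j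
    simp only [Finset.mem_filter, Finset.mem_univ, true_and]
    constructor
    · intro hxj
      by_contra hc
      push_neg at hc
      rcases eq_or_lt_of_le hc with h | h
      · have : j = i := Fin.ext h.symm
        subst this; exact lt_irrefl _ hxj
      · exact absurd (hjk i j hi (Fin.lt_def.mpr h)) (by linarith)
    · intro hj
      rcases lt_or_ge (j : ℕ) 2 with h | h
      · have hx2i : x ⟨2, by omega⟩ < x j := by
          interval_cases hj2 : (j : ℕ)
          · rwa [show j = ⟨0, by omega⟩ from Fin.ext hj2]
          · rwa [show j = ⟨1, by omega⟩ from Fin.ext hj2]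
        exact lt_of_le_of_lt (hle2 i hi) hx2i
      · exact hjk j i h (Fin.lt_def.mpr hj)
  rw [hset]
  exact CnFD.card_filter_val_lt _ i.isLt.le

lemma rank_le_one (hn : 2 < n) (x : Fin n → ℝ)
    (h20 : x ⟨2, by omega⟩ < x ⟨0, by omega⟩) (h21 : x ⟨2, by omega⟩ < x ⟨1, by omega⟩)
    (hjk : ∀ j k : Fin n, 2 ≤ (j : ℕ) → j < k → x k < x j)
    (i : Fin n) (hi : (i : ℕ) < 2) :
    ((Finset.univ : Finset (Fin n)).filter (fun j => x i < x j)).card ≤ 1 := by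
  have hle2 : ∀ k : Fin n, 2 ≤ (k : ℕ) → x k ≤ x ⟨2, by omega⟩ := by
    intro k hk
    rcases eq_or_lt_of_le hk with h | h
    · have : k = ⟨2, by omega⟩ := Fin.ext h.symm
      rw [this]
    · exact (hjk ⟨2, by omega⟩ k (by simp) (by simpa [Fin.lt_def] using h)).le
  have h2i : x ⟨2, by omega⟩ < x i := by
    interval_cases hi2 : (i : ℕ)
    · rwa [show i = ⟨0, by omega⟩ from Fin.ext hi2]
    · rwa [show i = ⟨1, by omega⟩ from Fin.ext hi2]
  have hmem : ∀ j : Fin n, x i < x j → (j : ℕ) < 2 ∧ j ≠ i := by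
    intro j hj
    constructor
    · by_contra h
      push_neg at h
      have := hle2 j h
      linarith
    · rintro rfl; exact lt_irrefl _ hj
  apply Finset.card_le_one.mpr
  intro a ha b hb
  simp only [Finset.mem_filter, Finset.mem_univ, true_and] at ha hb
  obtain ⟨ha2, hai⟩ := hmem a ha
  obtain ⟨hb2, hbi⟩ := hmem b hb
  have : (a : ℕ) ≠ (i : ℕ) := fun h => hai (Fin.ext h)
  have : (b : ℕ) ≠ (i : ℕ) := fun h => hbi (Fin.ext h)
  apply Fin.ext
  omega

end CnFD2
open Finset
namespace CnFD3
set_option maxHeartbeats 1000000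

lemma uniqueness {n : ℕ} (hn : 2 < n) (x y : Fin n → ℝ) (σ : Equiv.Perm (Fin n))
    (ε : Fin n → ℝ) (t : Fin n → ℤ)
    (hε : ∀ i, ε i = 1 ∨ ε i = -1)
    (hsign : ((Equiv.Perm.sign σ : ℤ) : ℝ) * ∏ i, ε i = 1)
    (hy : ∀ i, y i = ε i * x (σ⁻¹ i) + (t i : ℝ))
    (hx0 : x ⟨0, by omega⟩ < 1 / 2) (hx1 : x ⟨1, by omega⟩ < 1 / 2)
    (hx20 : x ⟨2, by omega⟩ < x ⟨0, by omega⟩) (hx21 : x ⟨2, by omega⟩ < x ⟨1, by omega⟩)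
    (hxjk : ∀ j k : Fin n, 2 ≤ (j : ℕ) → j < k → x k < x j)
    (hxl : 0 < x ⟨n - 1, by omega⟩)
    (hy0 : y ⟨0, by omega⟩ < 1 / 2) (hy1 : y ⟨1, by omega⟩ < 1 / 2)
    (hy20 : y ⟨2, by omega⟩ < y ⟨0, by omega⟩) (hy21 : y ⟨2, by omega⟩ < y ⟨1, by omega⟩)
    (hyjk : ∀ j k : Fin n, 2 ≤ (j : ℕ) → j < k → y k < y j)
    (hyl : 0 < y ⟨n - 1, by omega⟩) : y = x := by
  have hxb := CnFD.chamber_bounds hn x hx0 hx1 hx20 hx21 hxjk hxl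
  have hyb := CnFD.chamber_bounds hn y hy0 hy1 hy20 hy21 hyjk hyl
  set S : Equiv.Perm (Fin n) := σ⁻¹ with hS
  -- Step B : all ε i = 1 and y = x ∘ S
  have key : ∀ i, ε i = 1 ∧ y i = x (S i) := by
    intro i
    obtain ⟨hy0', hy1'⟩ := hyb i
    obtain ⟨hx0', hx1'⟩ := hxb (S i)
    rcases hε i with h | h
    · have ht : (t i : ℝ) = y i - x (S i) := by rw [hy i, h]; ring
      have ht1 : (t i : ℝ) < 1 := by rw [ht]; linarith
      have ht2 : (-1 : ℝ) < (t i : ℝ) := by rw [ht]; linarith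
      have : t i = 0 := by
        have h1 : t i < 1 := by exact_mod_cast ht1
        have h2 : -1 < t i := by exact_mod_cast ht2
        omega
      refine ⟨h, ?_⟩
      rw [hy i, h, this]; push_cast; ring
    · exfalso
      have ht : (t i : ℝ) = y i + x (S i) := by rw [hy i, h]; ring
      have ht1 : (t i : ℝ) < 1 := by rw [ht]; linarith
      have ht2 : (0 : ℝ) < (t i : ℝ) := by rw [ht]; linarith
      have h1 : t i < 1 := by exact_mod_cast ht1
      have h2 : 0 < t i := by exact_mod_cast ht2
      omega
  have hyS : ∀ i, y i = x (S i) := fun i => (key i).2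
  -- Step C : sign σ = 1
  have hsig1 : Equiv.Perm.sign σ = 1 := by
    have hp : ∏ i, ε i = 1 := Finset.prod_eq_one (fun i _ => (key i).1)
    rw [hp, mul_one] at hsign
    have h2 : (Equiv.Perm.sign σ : ℤ) = 1 := by exact_mod_cast hsign
    rcases Int.units_eq_one_or (Equiv.Perm.sign σ) with h | h
    · exact h
    · rw [h] at h2; norm_num at h2
  -- Step D : S fixes all indices ≥ 2
  have hfix : ∀ i : Fin n, 2 ≤ (i : ℕ) → S i = i := by
    intro i hi
    have hcard : ((Finset.univ : Finset (Fin n)).filter (fun j => y i < y j)).card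
        = ((Finset.univ : Finset (Fin n)).filter (fun j => x (S i) < x j)).card := by
      have : (Finset.univ : Finset (Fin n)).filter (fun j => y i < y j)
          = Finset.univ.filter (fun j => x (S i) < x (S j)) := by
        apply Finset.filter_congr
        intro j _
        rw [hyS i, hyS j]
      rw [this]
      exact CnFD.card_filter_comp x S _
    have hry : ((Finset.univ : Finset (Fin n)).filter (fun j => y i < y j)).card = (i : ℕ) :=
      CnFD2.rank_eq hn y hy20 hy21 hyjk i hi
    rcases lt_or_ge ((S i : Fin n) : ℕ) 2 with h | h
    · have := CnFD2.rank_le_one hn x hx20 hx21 hxjk (S i) h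
      omega
    · have := CnFD2.rank_eq hn x hx20 hx21 hxjk (S i) h
      exact Fin.ext (by omega)
  -- S maps {0,1} into {0,1}
  have hlt2 : ∀ i : Fin n, (i : ℕ) < 2 → ((S i : Fin n) : ℕ) < 2 := by
    intro i hi
    by_contra h
    push_neg at h
    have h2 := hfix (S i) h
    have := S.injective h2
    omega
  have h0lt : ((⟨0, by omega⟩ : Fin n) : ℕ) < 2 := by norm_num
  have h1lt : ((⟨1, by omega⟩ : Fin n) : ℕ) < 2 := by norm_num
  -- case on S 0
  have hS0lt := hlt2 _ h0lt
  have hS1lt := hlt2 _ h1lt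
  rcases (by omega : ((S ⟨0, by omega⟩ : Fin n) : ℕ) = 0 ∨ ((S ⟨0, by omega⟩ : Fin n) : ℕ) = 1) with hS0 | hS0
  · -- S 0 = 0, then S 1 = 1, so S = id on everything
    have hS0' : S ⟨0, by omega⟩ = ⟨0, by omega⟩ := Fin.ext hS0
    have hS1' : S ⟨1, by omega⟩ = ⟨1, by omega⟩ := by
      rcases (by omega : ((S ⟨1, by omega⟩ : Fin n) : ℕ) = 0 ∨ ((S ⟨1, by omega⟩ : Fin n) : ℕ) = 1) with h | h
      · exfalso
        have : S ⟨1, by omega⟩ = S ⟨0, by omega⟩ := by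
          rw [hS0']; exact Fin.ext h
        have := S.injective this
        simp [Fin.ext_iff] at this
      · exact Fin.ext h
    funext i
    rw [hyS i]
    congr 1
    rcases lt_or_ge (i : ℕ) 2 with h | h
    · interval_cases hi2 : (i : ℕ)
      · rw [show i = ⟨0, by omega⟩ from Fin.ext hi2]; exact hS0'
      · rw [show i = ⟨1, by omega⟩ from Fin.ext hi2]; exact hS1'
    · exact hfix i h
  · -- S 0 = 1, then S 1 = 0, so S = swap, sign contradiction
    exfalso
    have hS0' : S ⟨0, by omega⟩ = ⟨1, by omega⟩ := Fin.ext hS0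
    have hS1' : S ⟨1, by omega⟩ = ⟨0, by omega⟩ := by
      rcases (by omega : ((S ⟨1, by omega⟩ : Fin n) : ℕ) = 0 ∨ ((S ⟨1, by omega⟩ : Fin n) : ℕ) = 1) with h | h
      · exact Fin.ext h
      · exfalso
        have : S ⟨1, by omega⟩ = S ⟨0, by omega⟩ := by
          rw [hS0']; exact Fin.ext h
        have := S.injective this
        simp [Fin.ext_iff] at this
    have hSeq : S = Equiv.swap (⟨0, by omega⟩ : Fin n) ⟨1, by omega⟩ := by
      ext i
      rcases lt_or_ge (i : ℕ) 2 with h | h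
      · interval_cases hi2 : (i : ℕ)
        · rw [show i = ⟨0, by omega⟩ from Fin.ext hi2, hS0', Equiv.swap_apply_left]
        · rw [show i = ⟨1, by omega⟩ from Fin.ext hi2, hS1', Equiv.swap_apply_right]
      · rw [hfix i h, Equiv.swap_apply_of_ne_of_ne]
        · intro hc; rw [hc] at h; simp at h
        · intro hc; rw [hc] at h; simp at h
    have : Equiv.Perm.sign S = -1 := by
      rw [hSeq]
      exact Equiv.Perm.sign_swap (by simp [Fin.ext_iff])
    rw [hS, Equiv.Perm.sign_inv, hsig1] at this
    exact absurd this (by decide)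

end CnFD3
open Finset
namespace CnFD4
set_option maxHeartbeats 1000000

lemma exists_aux {n : ℕ} (hn : 2 < n) (x : Fin n → ℝ) (π : Equiv.Perm (Fin n))
    (ε₀ : Fin n → ℝ) (t₀ : Fin n → ℤ)
    (hε : ∀ i, ε₀ i = 1 ∨ ε₀ i = -1)
    (h0 : ∀ i : Fin n, 0 ≤ ε₀ (π i) * x (π i) + (t₀ (π i) : ℝ))
    (hhalf : ∀ i : Fin n, ε₀ (π i) * x (π i) + (t₀ (π i) : ℝ) ≤ 1 / 2)
    (hmono : ∀ i j : Fin n, i ≤ j →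
      ε₀ (π j) * x (π j) + (t₀ (π j) : ℝ) ≤ ε₀ (π i) * x (π i) + (t₀ (π i) : ℝ)) :
    ∃ (σ : Equiv.Perm (Fin n)) (ε : Fin n → ℝ) (t : Fin n → ℤ),
      (∀ i, ε i = 1 ∨ ε i = -1) ∧
      ((Equiv.Perm.sign σ : ℤ) : ℝ) * ∏ i, ε i = 1 ∧
      (∀ y : Fin n → ℝ, (∀ i, y i = ε i * x (σ⁻¹ i) + (t i : ℝ)) →
        y ⟨0, by omega⟩ ≤ 1 / 2 ∧ y ⟨1, by omega⟩ ≤ 1 / 2 ∧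
        y ⟨2, by omega⟩ ≤ y ⟨0, by omega⟩ ∧ y ⟨2, by omega⟩ ≤ y ⟨1, by omega⟩ ∧
        (∀ j k : Fin n, 2 ≤ (j : ℕ) → j ≤ k → y k ≤ y j) ∧
        0 ≤ y ⟨n - 1, by omega⟩) := by
  have hprod : (∏ i, ε₀ i) = 1 ∨ (∏ i, ε₀ i) = -1 := by
    apply mul_self_eq_one_iff.mp
    rw [← Finset.prod_mul_distrib]
    apply Finset.prod_eq_one
    intro i _
    rcases hε i with h | h <;> rw [h] <;> norm_num
  have hs : ((Equiv.Perm.sign π⁻¹ : ℤ) : ℝ) * ∏ i, ε₀ i = 1 ∨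
      ((Equiv.Perm.sign π⁻¹ : ℤ) : ℝ) * ∏ i, ε₀ i = -1 := by
    rcases Int.units_eq_one_or (Equiv.Perm.sign π⁻¹) with h | h <;>
      rcases hprod with h2 | h2 <;> rw [h, h2] <;> norm_num
  rcases hs with hs | hs
  · -- no extra swap needed
    refine ⟨π⁻¹, fun i => ε₀ (π i), fun i => t₀ (π i), fun i => hε (π i), ?_, ?_⟩
    · rw [show (∏ i, ε₀ (π i)) = ∏ i, ε₀ i from Equiv.prod_comp π ε₀]
      exact hs
    · intro y hy
      have hyv : ∀ i, y i = ε₀ (π i) * x (π i) + (t₀ (π i) : ℝ) := by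
        intro i
        have := hy i
        rwa [inv_inv] at this
      refine ⟨by rw [hyv]; exact hhalf _, by rw [hyv]; exact hhalf _, ?_, ?_, ?_, ?_⟩
      · rw [hyv, hyv]; exact hmono _ _ (by simp [Fin.le_def])
      · rw [hyv, hyv]; exact hmono _ _ (by simp [Fin.le_def])
      · intro j k _ hjk
        rw [hyv, hyv]; exact hmono _ _ hjk
      · rw [hyv]; exact h0 _
  · -- compose with the swap of coordinates 0 and 1
    set a : Fin n := ⟨0, by omega⟩
    set b : Fin n := ⟨1, by omega⟩
    have hab : a ≠ b := by simp [a, b, Fin.ext_iff]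
    set τ : Equiv.Perm (Fin n) := Equiv.swap a b with hτ
    refine ⟨τ * π⁻¹, fun i => ε₀ (π (τ i)), fun i => t₀ (π (τ i)),
      fun i => hε (π (τ i)), ?_, ?_⟩
    · have hp : (∏ i, ε₀ (π (τ i))) = ∏ i, ε₀ i := by
        rw [show (fun i => ε₀ (π (τ i))) = fun i => ε₀ ((π * τ) i) from rfl]
        exact Equiv.prod_comp (π * τ) ε₀
      rw [hp]
      have hsgn : Equiv.Perm.sign (τ * π⁻¹) = - Equiv.Perm.sign π⁻¹ := by
        simp [hτ, Equiv.Perm.sign_mul, Equiv.Perm.sign_swap hab]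
      rw [hsgn]
      push_cast
      linarith
    · intro y hy
      have hyv : ∀ i, y i = ε₀ (π (τ i)) * x (π (τ i)) + (t₀ (π (τ i)) : ℝ) := by
        intro i
        have h := hy i
        have : (τ * π⁻¹)⁻¹ i = π (τ i) := by
          rw [mul_inv_rev, inv_inv]
          simp [hτ, Equiv.swap_inv]
        rwa [this] at h
      have hτa : τ a = b := Equiv.swap_apply_left a b
      have hτb : τ b = a := Equiv.swap_apply_right a b
      have hτfix : ∀ j : Fin n, 2 ≤ (j : ℕ) → τ j = j := by
        intro j hj
        apply Equiv.swap_apply_of_ne_of_ne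
        · intro hc; rw [hc] at hj; simp [a] at hj
        · intro hc; rw [hc] at hj; simp [b] at hj
      have hc2 : ((⟨2, by omega⟩ : Fin n) : ℕ) = 2 := rfl
      have hτ2 : τ ⟨2, by omega⟩ = ⟨2, by omega⟩ := hτfix _ (by omega)
      have hτl : τ ⟨n - 1, by omega⟩ = ⟨n - 1, by omega⟩ := hτfix _ (by show 2 ≤ n - 1; omega)
      refine ⟨?_, ?_, ?_, ?_, ?_, ?_⟩
      · rw [hyv]; show _ ≤ _; rw [show τ a = b from hτa]; exact hhalf _
      · rw [hyv]; show _ ≤ _; rw [show τ b = a from hτb]; exact hhalf _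
      · rw [hyv, hyv, hτ2, hτa]; exact hmono _ _ (by simp [b, Fin.le_def])
      · rw [hyv, hyv, hτ2, hτb]; exact hmono _ _ (by simp [a, Fin.le_def])
      · intro j k hj hjk
        rw [hyv, hyv, hτfix j hj, hτfix k (le_trans hj (by exact_mod_cast hjk))]
        exact hmono _ _ hjk
      · rw [hyv, hτl]; exact h0 _

end CnFD4
open Finset
namespace CnFD5

lemma exists_main {n : ℕ} (hn : 2 < n) (x : Fin n → ℝ) :
    ∃ (σ : Equiv.Perm (Fin n)) (ε : Fin n → ℝ) (t : Fin n → ℤ),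
      (∀ i, ε i = 1 ∨ ε i = -1) ∧
      ((Equiv.Perm.sign σ : ℤ) : ℝ) * ∏ i, ε i = 1 ∧
      (∀ y : Fin n → ℝ, (∀ i, y i = ε i * x (σ⁻¹ i) + (t i : ℝ)) →
        y ⟨0, by omega⟩ ≤ 1 / 2 ∧ y ⟨1, by omega⟩ ≤ 1 / 2 ∧
        y ⟨2, by omega⟩ ≤ y ⟨0, by omega⟩ ∧ y ⟨2, by omega⟩ ≤ y ⟨1, by omega⟩ ∧
        (∀ j k : Fin n, 2 ≤ (j : ℕ) → j ≤ k → y k ≤ y j) ∧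
        0 ≤ y ⟨n - 1, by omega⟩) := by
  set ε₀ : Fin n → ℝ := fun i => if Int.fract (x i) ≤ 1 / 2 then 1 else -1 with hε₀
  set t₀ : Fin n → ℤ := fun i => if Int.fract (x i) ≤ 1 / 2 then -⌊x i⌋ else ⌊x i⌋ + 1 with ht₀
  have hε : ∀ i, ε₀ i = 1 ∨ ε₀ i = -1 := by
    intro i
    simp only [hε₀]
    split
    · exact Or.inl rfl
    · exact Or.inr rfl
  have hbound : ∀ i, 0 ≤ ε₀ i * x i + (t₀ i : ℝ) ∧ ε₀ i * x i + (t₀ i : ℝ) ≤ 1 / 2 := by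
    intro i
    have hf : Int.fract (x i) = x i - ⌊x i⌋ := rfl
    have h1 := Int.fract_nonneg (x i)
    have h2 := Int.fract_lt_one (x i)
    by_cases h : Int.fract (x i) ≤ 1 / 2
    · simp only [hε₀, ht₀, if_pos h]
      push_cast
      constructor <;> [linarith [hf ▸ h1]; linarith [hf ▸ h]]
    · push_neg at h
      simp only [hε₀, ht₀, if_neg (not_le.mpr h)]
      push_cast
      rw [hf] at h h2
      constructor <;> linarith
  set u : Fin n → ℝ := fun i => ε₀ i * x i + (t₀ i : ℝ) with hu
  set π : Equiv.Perm (Fin n) := (Tuple.sort u) * Fin.revPerm with hπ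
  have hmono : ∀ i j : Fin n, i ≤ j → u (π j) ≤ u (π i) := by
    intro i j hij
    have h1 : Fin.rev j ≤ Fin.rev i := Fin.rev_le_rev.mpr hij
    have := Tuple.monotone_sort u h1
    simpa [hπ, Function.comp, Equiv.Perm.mul_apply] using this
  exact CnFD4.exists_aux hn x π ε₀ t₀ hε (fun i => (hbound (π i)).1)
    (fun i => (hbound (π i)).2) hmono

end CnFD5

/-- Fundamental domain of the even affine Weyl group of type `Cₙ` (`n ≥ 3`), realized
concretely: transformations `x ↦ y` with `y i = ε i * x (σ⁻¹ i) + t i` for a permutation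
`σ`, signs `ε` with `sign σ * ∏ i, ε i = 1`, and an integer translation `t`. -/
theorem Cn_even_affine_fundamental_domain (n : ℕ) (hn : 3 ≤ n) :
    (∀ x : Fin n → ℝ, ∃ (σ : Equiv.Perm (Fin n)) (ε : Fin n → ℝ) (t : Fin n → ℤ),
      (∀ i, ε i = 1 ∨ ε i = -1) ∧
      ((Equiv.Perm.sign σ : ℤ) : ℝ) * ∏ i, ε i = 1 ∧
      (∀ y : Fin n → ℝ, (∀ i, y i = ε i * x (σ⁻¹ i) + (t i : ℝ)) →
        y ⟨0, by omega⟩ ≤ 1 / 2 ∧ y ⟨1, by omega⟩ ≤ 1 / 2 ∧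
        y ⟨2, by omega⟩ ≤ y ⟨0, by omega⟩ ∧ y ⟨2, by omega⟩ ≤ y ⟨1, by omega⟩ ∧
        (∀ j k : Fin n, 2 ≤ (j : ℕ) → j ≤ k → y k ≤ y j) ∧
        0 ≤ y ⟨n - 1, by omega⟩)) ∧
    (∀ (x y : Fin n → ℝ) (σ : Equiv.Perm (Fin n)) (ε : Fin n → ℝ) (t : Fin n → ℤ),
      (∀ i, ε i = 1 ∨ ε i = -1) →
      ((Equiv.Perm.sign σ : ℤ) : ℝ) * ∏ i, ε i = 1 →
      (∀ i, y i = ε i * x (σ⁻¹ i) + (t i : ℝ)) →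
      x ⟨0, by omega⟩ < 1 / 2 → x ⟨1, by omega⟩ < 1 / 2 →
      x ⟨2, by omega⟩ < x ⟨0, by omega⟩ → x ⟨2, by omega⟩ < x ⟨1, by omega⟩ →
      (∀ j k : Fin n, 2 ≤ (j : ℕ) → j < k → x k < x j) →
      0 < x ⟨n - 1, by omega⟩ →
      y ⟨0, by omega⟩ < 1 / 2 → y ⟨1, by omega⟩ < 1 / 2 →
      y ⟨2, by omega⟩ < y ⟨0, by omega⟩ → y ⟨2, by omega⟩ < y ⟨1, by omega⟩ →
      (∀ j k : Fin n, 2 ≤ (j : ℕ) → j < k → y k < y j) →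
      0 < y ⟨n - 1, by omega⟩ →
      y = x) := by
  constructor
  · intro x
    exact CnFD5.exists_main hn x
  · intro x y σ ε t hε hs hy hx0 hx1 hx20 hx21 hxjk hxl hy0 hy1 hy20 hy21 hyjk hyl
    exact CnFD3.uniqueness hn x y σ ε t hε hs hy hx0 hx1 hx20 hx21 hxjk hxl
      hy0 hy1 hy20 hy21 hyjk hyl
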